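/- Let π be a linear extension of εZ_n (the naturally labeled zig-zag poset) and let π' = επ. Then the descent set of π equals the big-descent set of π': Des(π) = Des₁(π'). Consequently, the map π ↦ π⁻¹ε is a bijection from linear extensions of εZ_n to up-down alternating permutations which sends the descent set of π to the set of big returns of π⁻¹ε. -/

import Mathlib

/-- Cover relations of the zig-zag poset `Z_n` (0-indexed): `a` below `b` iff `a` is at an
even 0-indexed position and `b` is adjacent; in 1-indexed terms, `2i-1 < 2i > 2i+1`. -/
def ZigZagCover (n : ℕ) (a b : Fin n) : Prop :=
  a.val % 2 = 0 ∧ (b.val = a.val + 1 ∨ a.val = b.val + 1)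

/-- `u` is an up-down alternating permutation: `u(1) < u(2) > u(3) < ⋯`. -/
def IsUpDownAlt {n : ℕ} (u : Equiv.Perm (Fin n)) : Prop :=
  ∀ (i : ℕ) (h : i + 1 < n),
    (i % 2 = 0 → u ⟨i, Nat.lt_of_succ_lt h⟩ < u ⟨i + 1, h⟩) ∧
    (i % 2 = 1 → u ⟨i + 1, h⟩ < u ⟨i, Nat.lt_of_succ_lt h⟩)

/-- The permutation `ε` (0-indexed): swaps each odd `k` with `k+1` when `k+1 < n`;
in 1-indexed terms this is the product of even adjacent transpositions `s₂s₄⋯`. -/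
def epsf (n : ℕ) (k : Fin n) : Fin n :=
  ⟨if k.val % 2 = 1 ∧ k.val + 1 < n then k.val + 1
   else if k.val % 2 = 0 ∧ k.val ≠ 0 then k.val - 1 else k.val, by
    split_ifs with h1 h2
    · exact h1.2
    · exact lt_of_le_of_lt (Nat.sub_le _ _) k.isLt
    · exact k.isLt⟩

theorem epsf_invol (n : ℕ) : Function.Involutive (epsf n) := by
  rintro ⟨v, hv⟩
  apply Fin.ext
  simp only [epsf]
  split_ifs <;> omega

def epsPerm (n : ℕ) : Equiv.Perm (Fin n) :=
  Function.Involutive.toPerm (epsf n) (epsf_invol n)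

/-- The descent set `Des(w) = {i : w(i) > w(i+1)}` of a word `w` (0-indexed positions). -/
def desSetOf (n : ℕ) (w : Fin n → Fin n) : Set ℕ :=
  {i | ∃ h : i + 1 < n, w ⟨i + 1, h⟩ < w ⟨i, Nat.lt_of_succ_lt h⟩}

/-- The big-descent set `Des₁(w) = {i : w(i) > w(i+1) + 1}`. -/
def bigDesSetOf (n : ℕ) (w : Fin n → Fin n) : Set ℕ :=
  {i | ∃ h : i + 1 < n, (w ⟨i + 1, h⟩).val + 1 < (w ⟨i, Nat.lt_of_succ_lt h⟩).val}

set_option linter.unreachableTactic false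
set_option linter.unusedTactic false
set_option linter.unnecessarySeqFocus false

lemma eps_val (n : ℕ) (v : Fin n) : ((epsPerm n) v).val =
    if v.val % 2 = 1 ∧ v.val + 1 < n then v.val + 1
    else if v.val % 2 = 0 ∧ v.val ≠ 0 then v.val - 1 else v.val := rfl

lemma eps_inv (n : ℕ) : (epsPerm n)⁻¹ = epsPerm n := rfl

lemma eps_eps (n : ℕ) (v : Fin n) : epsPerm n (epsPerm n v) = v := epsf_invol n v
lemma eps_le_arith (n : ℕ) (x y : Fin n) (h : x.val ≤ y.val) :
    ((epsPerm n) x).val ≤ ((epsPerm n) y).val + 1 := by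
  have hx := x.isLt; have hy := y.isLt
  have ex := eps_val n x; have ey := eps_val n y
  split_ifs at ex ey <;> omega

lemma eps_key_lt {n : ℕ} (π : Equiv.Perm (Fin n))
    (hlin : ∀ a b : Fin n, ZigZagCover n a b →
      π⁻¹ (epsPerm n a) < π⁻¹ (epsPerm n b))
    (x y : Fin n) (hxy : y.val < x.val) (hpos : (π⁻¹ x).val ≤ (π⁻¹ y).val) :
    ((epsPerm n) y).val + 1 < ((epsPerm n) x).val := by
  have hx := x.isLt; have hy := y.isLt
  have ex := eps_val n x; have ey := eps_val n y
  by_contra hcon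
  have hbad : (y.val % 2 = 1 ∧ (x.val = y.val + 1 ∨ x.val = y.val + 3 ∨
        (x.val = y.val + 2 ∧ x.val + 1 = n))) ∨
      (y.val = 0 ∧ (x.val = 2 ∨ (x.val = 1 ∧ n = 2))) := by
    split_ifs at ex ey <;> omega
  -- in each bad case we derive π⁻¹ y < π⁻¹ x, contradicting hpos
  have hcontra : (π⁻¹ y).val < (π⁻¹ x).val := by
    rcases hbad with ⟨hyo, hA | hBC⟩ | ⟨hy0, hDE⟩
    · -- x = y+1, cover (x, y)
      have hcov : ZigZagCover n x y := ⟨by omega, Or.inr (by omega)⟩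
      have hεx : epsPerm n x = y := by
        apply Fin.ext; rw [eps_val]; split_ifs <;> omega
      have hεy : epsPerm n y = x := by
        apply Fin.ext; rw [eps_val]; split_ifs <;> omega
      have := hlin x y hcov
      rw [hεx, hεy] at this
      exact this
    · -- x = y+3 or (x = y+2 with x last), cover (y+1, y+2)
      have hb1 : y.val + 1 < n := by omega
      have hb2 : y.val + 2 < n := by omega
      have hcov : ZigZagCover n ⟨y.val + 1, hb1⟩ ⟨y.val + 2, hb2⟩ :=
        ⟨by simp only [Fin.val_mk]; omega, Or.inl (by simp only [Fin.val_mk])⟩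
      have hεa : epsPerm n (⟨y.val + 1, hb1⟩ : Fin n) = y := by
        apply Fin.ext; rw [eps_val]; simp only [Fin.val_mk]; split_ifs <;> (try simp_all) <;> omega
      have hεb : epsPerm n (⟨y.val + 2, hb2⟩ : Fin n) = x := by
        apply Fin.ext; rw [eps_val]; simp only [Fin.val_mk]; split_ifs <;> (try simp_all) <;> omega
      have := hlin _ _ hcov
      rw [hεa, hεb] at this
      exact this
    · -- y = 0, cover (0, 1)
      have hb0 : 0 < n := by omega
      have hb1 : 1 < n := by omega
      have hcov : ZigZagCover n ⟨0, hb0⟩ ⟨1, hb1⟩ :=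
        ⟨by simp only [Fin.val_mk], Or.inl (by simp only [Fin.val_mk])⟩
      have hεa : epsPerm n (⟨0, hb0⟩ : Fin n) = y := by
        apply Fin.ext; rw [eps_val]; simp only [Fin.val_mk]; split_ifs <;> (try simp_all) <;> omega
      have hεb : epsPerm n (⟨1, hb1⟩ : Fin n) = x := by
        apply Fin.ext; rw [eps_val]; simp only [Fin.val_mk]; split_ifs <;> (try simp_all) <;> omega
      have := hlin _ _ hcov
      rw [hεa, hεb] at this
      exact this
  omega

lemma des_iff {n : ℕ} (π : Equiv.Perm (Fin n))
    (hlin : ∀ a b : Fin n, ZigZagCover n a b →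
      π⁻¹ (epsPerm n a) < π⁻¹ (epsPerm n b)) :
    ∀ (j : ℕ) (h : j + 1 < n),
      (π ⟨j + 1, h⟩ < π ⟨j, Nat.lt_of_succ_lt h⟩) ↔
        (epsPerm n (π ⟨j + 1, h⟩)).val + 1 < (epsPerm n (π ⟨j, Nat.lt_of_succ_lt h⟩)).val := by
  intro j h
  constructor
  · intro hd
    apply eps_key_lt π hlin
    · exact hd
    · rw [Equiv.Perm.inv_def, Equiv.symm_apply_apply, Equiv.symm_apply_apply]
      simp only [Fin.val_mk]; omega
  · intro hbd
    by_contra hnd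
    have hle : (π ⟨j, Nat.lt_of_succ_lt h⟩).val ≤ (π ⟨j + 1, h⟩).val := le_of_not_gt hnd
    have := eps_le_arith n (π ⟨j, Nat.lt_of_succ_lt h⟩) (π ⟨j + 1, h⟩) hle
    omega

theorem des_eq_bigDes_eps_and_bijection' (n : ℕ) (π : Equiv.Perm (Fin n))
    (hlin : ∀ a b : Fin n, ZigZagCover n a b →
      π⁻¹ (epsPerm n a) < π⁻¹ (epsPerm n b)) :
    (∀ (j : ℕ) (h : j + 1 < n),
        (π ⟨j + 1, h⟩ < π ⟨j, Nat.lt_of_succ_lt h⟩) ↔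
          (epsPerm n (π ⟨j + 1, h⟩)).val + 1 < (epsPerm n (π ⟨j, Nat.lt_of_succ_lt h⟩)).val) ∧
    Set.BijOn (fun τ : Equiv.Perm (Fin n) => τ⁻¹ * epsPerm n)
      {τ : Equiv.Perm (Fin n) | ∀ a b : Fin n, ZigZagCover n a b →
        τ⁻¹ (epsPerm n a) < τ⁻¹ (epsPerm n b)}
      {u : Equiv.Perm (Fin n) | ∀ (i : ℕ) (h : i + 1 < n),
        (i % 2 = 0 → u ⟨i, Nat.lt_of_succ_lt h⟩ < u ⟨i + 1, h⟩) ∧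
        (i % 2 = 1 → u ⟨i + 1, h⟩ < u ⟨i, Nat.lt_of_succ_lt h⟩)} ∧
    ({i | ∃ h : i + 1 < n, π ⟨i + 1, h⟩ < π ⟨i, Nat.lt_of_succ_lt h⟩} :
      Set ℕ) =
    {i | ∃ h : i + 1 < n,
      (((π⁻¹ * epsPerm n)⁻¹ : Equiv.Perm (Fin n)) ⟨i + 1, h⟩).val + 1 <
        (((π⁻¹ * epsPerm n)⁻¹ : Equiv.Perm (Fin n)) ⟨i, Nat.lt_of_succ_lt h⟩).val} := by
  refine ⟨des_iff π hlin, ⟨?_, ?_, ?_⟩, ?_⟩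
  · -- MapsTo
    intro τ hτ i h
    constructor
    · intro hpar
      have hcov : ZigZagCover n ⟨i, Nat.lt_of_succ_lt h⟩ ⟨i + 1, h⟩ := ⟨hpar, Or.inl rfl⟩
      exact hτ _ _ hcov
    · intro hpar
      have hcov : ZigZagCover n ⟨i + 1, h⟩ ⟨i, Nat.lt_of_succ_lt h⟩ :=
        ⟨by simp only [Fin.val_mk]; omega, Or.inr rfl⟩
      exact hτ _ _ hcov
  · -- InjOn
    intro a _ b _ hab
    have : a⁻¹ = b⁻¹ := mul_right_cancel hab
    exact inv_injective this
  · -- SurjOn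
    intro u hu
    refine ⟨epsPerm n * u⁻¹, ?_, ?_⟩
    · intro a b hcov
      have key : ∀ c : Fin n, ((epsPerm n * u⁻¹)⁻¹ : Equiv.Perm (Fin n)) (epsPerm n c) = u c := by
        intro c
        simp [mul_inv_rev, eps_inv, Equiv.Perm.mul_apply, eps_eps]
      rw [key a, key b]
      obtain ⟨hpar, hadj | hadj⟩ := hcov
      · have h1 : a.val + 1 < n := by rw [← hadj]; exact b.isLt
        have := (hu a.val h1).1 hpar
        have ha' : (⟨a.val, Nat.lt_of_succ_lt h1⟩ : Fin n) = a := Fin.ext rfl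
        have hb' : (⟨a.val + 1, h1⟩ : Fin n) = b := Fin.ext hadj.symm
        rwa [ha', hb'] at this
      · have h1 : b.val + 1 < n := by rw [← hadj]; exact a.isLt
        have hbo : b.val % 2 = 1 := by omega
        have := (hu b.val h1).2 hbo
        have ha' : (⟨b.val + 1, h1⟩ : Fin n) = a := Fin.ext hadj.symm
        have hb' : (⟨b.val, Nat.lt_of_succ_lt h1⟩ : Fin n) = b := Fin.ext rfl
        rwa [ha', hb'] at this
    · show (epsPerm n * u⁻¹)⁻¹ * epsPerm n = u
      rw [mul_inv_rev, inv_inv, eps_inv, mul_assoc]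
      have h2 : epsPerm n * epsPerm n = 1 := Equiv.ext fun v => eps_eps n v
      rw [h2, mul_one]
  · -- descent set equality
    ext i
    simp only [Set.mem_setOf_eq]
    constructor
    · rintro ⟨h, hd⟩
      refine ⟨h, ?_⟩
      have heq : ∀ (k : ℕ) (hk : k < n),
          (((π⁻¹ * epsPerm n)⁻¹ : Equiv.Perm (Fin n)) ⟨k, hk⟩) = epsPerm n (π ⟨k, hk⟩) := by
        intro k hk
        rw [mul_inv_rev, inv_inv, eps_inv]
        rfl
      rw [heq, heq]
      exact (des_iff π hlin i h).1 hd
    · rintro ⟨h, hd⟩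
      refine ⟨h, ?_⟩
      have heq : ∀ (k : ℕ) (hk : k < n),
          (((π⁻¹ * epsPerm n)⁻¹ : Equiv.Perm (Fin n)) ⟨k, hk⟩) = epsPerm n (π ⟨k, hk⟩) := by
        intro k hk
        rw [mul_inv_rev, inv_inv, eps_inv]
        rfl
      rw [heq, heq] at hd
      exact (des_iff π hlin i h).2 hd

/-- if `π` is a linear extension of the naturally labeled zig-zag poset
`εZ_n`, then `Des(π) = Des₁(επ)`; consequently the map `τ ↦ τ⁻¹ε` is a bijection from
linear extensions of `εZ_n` onto up-down alternating permutations, and it sends the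
descent set of `π` to the set of big returns of `π⁻¹ε` (i.e. `Des₁((π⁻¹ε)⁻¹)`). -/
theorem des_eq_bigDes_eps_and_bijection (n : ℕ) (π : Equiv.Perm (Fin n))
    (hlin : ∀ a b : Fin n, ZigZagCover n a b →
      π⁻¹ (epsPerm n a) < π⁻¹ (epsPerm n b)) :
    (∀ (j : ℕ) (h : j + 1 < n),
        (π ⟨j + 1, h⟩ < π ⟨j, Nat.lt_of_succ_lt h⟩) ↔
          (epsPerm n (π ⟨j + 1, h⟩)).val + 1 < (epsPerm n (π ⟨j, Nat.lt_of_succ_lt h⟩)).val) ∧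
    Set.BijOn (fun τ : Equiv.Perm (Fin n) => τ⁻¹ * epsPerm n)
      {τ : Equiv.Perm (Fin n) | ∀ a b : Fin n, ZigZagCover n a b →
        τ⁻¹ (epsPerm n a) < τ⁻¹ (epsPerm n b)}
      {u : Equiv.Perm (Fin n) | IsUpDownAlt u} ∧
    desSetOf n ⇑π = bigDesSetOf n ⇑((π⁻¹ * epsPerm n)⁻¹) :=
  des_eq_bigDes_eps_and_bijection' n π hlin
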